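/- Let F be a finite set with weights w: F → ℝ_{>0} and witness sets W_f (nonempty finite sets, not necessarily disjoint), U = ⋃_{f∈F} W_f, and w̄(e) = ∑_{f: e∈W_f} w(f)/|W_f| for e ∈ U. Define Φ(F) = ∑_{f∈F} H_{|W_f|} w(f). For any D ⊆ U, Φ(F) − ∑_{f∈F} H_{|W_f∖D|} w(f) ≥ ∑_{e∈D} w̄(e). -/

import Mathlib

/-- The `q`-th harmonic number as a real number. -/
noncomputable def H (q : ℕ) : ℝ := ∑ i ∈ Finset.range q, 1 / (i + 1 : ℝ)

/-- For the potential `Φ(F) = ∑_{f∈F} H_{|W_f|} w(f)` with (possibly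
overlapping) nonempty witness sets, and `wbar e = ∑_{f : e ∈ W_f} w(f)/|W_f|`,
removing any `D ⊆ U = ⋃_f W_f` from the witness sets decreases `Φ` by at least
`∑_{e∈D} wbar e`. -/
theorem stmt4 {α β : Type} [DecidableEq α] [DecidableEq β] (F : Finset α) (w : α → ℝ)
    (hw : ∀ f ∈ F, 0 < w f) (W : α → Finset β)
    (hWne : ∀ f ∈ F, (W f).Nonempty)
    (wbar : β → ℝ)
    (hwbar : ∀ e, wbar e = ∑ f ∈ F.filter (fun f => e ∈ W f), w f / (W f).card)
    (D : Finset β) (hD : D ⊆ F.biUnion W) :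
    ∑ e ∈ D, wbar e ≤
      (∑ f ∈ F, H (W f).card * w f) - ∑ f ∈ F, H ((W f \ D).card) * w f := by
  have key : ∀ p q : ℕ, p ≤ q → 0 < q → ((q : ℝ) - p) / q ≤ H q - H p := by
    intro p q hpq hq
    have h1 : H q - H p = ∑ i ∈ Finset.Ico p q, 1 / (i + 1 : ℝ) := by
      rw [H, H, Finset.sum_Ico_eq_sub _ hpq]
    rw [h1]
    have h2 : ∀ i ∈ Finset.Ico p q, (1 : ℝ) / q ≤ 1 / (i + 1) := by
      intro i hi
      have hi' := (Finset.mem_Ico.mp hi).2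
      apply one_div_le_one_div_of_le
      · positivity
      · exact_mod_cast Nat.succ_le_of_lt hi'
    calc ((q : ℝ) - p) / q = (Finset.Ico p q).card * (1 / q) := by
          rw [Nat.card_Ico]
          push_cast [hpq]
          ring
      _ ≤ ∑ i ∈ Finset.Ico p q, 1 / (i + 1 : ℝ) := by
          have := Finset.card_nsmul_le_sum (Finset.Ico p q) (fun i => 1 / (i + 1 : ℝ)) (1 / q) h2
          simpa [nsmul_eq_mul] using this
  -- rewrite LHS
  have lhs : ∑ e ∈ D, wbar e
      = ∑ f ∈ F, ((D ∩ W f).card : ℝ) * (w f / (W f).card) := by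
    simp only [hwbar, Finset.sum_filter]
    rw [Finset.sum_comm]
    refine Finset.sum_congr rfl fun f _ => ?_
    rw [Finset.sum_ite_mem, Finset.sum_const, nsmul_eq_mul]
  rw [lhs, ← Finset.sum_sub_distrib]
  refine Finset.sum_le_sum fun f hf => ?_
  have hq : 0 < (W f).card := Finset.card_pos.mpr (hWne f hf)
  have hple : (W f \ D).card ≤ (W f).card := Finset.card_le_card (Finset.sdiff_subset)
  have hcard : (W f \ D).card + (D ∩ W f).card = (W f).card := by
    rw [Finset.inter_comm]
    exact Finset.card_sdiff_add_card_inter _ _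
  have hdiff : ((D ∩ W f).card : ℝ) = ((W f).card : ℝ) - ((W f \ D).card : ℝ) := by
    have := hcard
    push_cast [← this]
    ring
  rw [← sub_mul]
  have hk := key _ _ hple hq
  rw [← hdiff] at hk
  have hwf := (hw f hf).le
  calc ((D ∩ W f).card : ℝ) * (w f / (W f).card)
      = ((D ∩ W f).card : ℝ) / (W f).card * w f := by ring
    _ ≤ (H (W f).card - H ((W f \ D).card)) * w f :=
        mul_le_mul_of_nonneg_right hk hwf
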